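/- arXiv:1904.05522 — 3 statements merged into one kernel-verified Lean document; each statement's English description precedes it below -/
import Mathlib

section
/- Let 0 < μ_b ≤ μ_g be the bad-state and good-state computing speeds, d > 0 a deadline, r ∈ ℕ the per-worker storage, and suppose ℓ_b := μ_b·d is a natural number with ℓ_b ≤ r, and set ℓ_g := min(⌊μ_g·d⌋, r). Let ℓ = (ℓ_1,…,ℓ_n) be any load vector with 0 ≤ ℓ_i ≤ r for all i, and define the rounded load vector ℓ′ by ℓ′_i = ℓ_b if ℓ_i ≤ ℓ_b and ℓ′_i = ℓ_g otherwise. Then for every speed vector μ = (μ_1,…,μ_n) with each μ_i ∈ {μ_b, μ_g} and every threshold K: if Σ_{i=1}^n ℓ_i·1{ℓ_i ≤ μ_i·d} ≥ K, then Σ_{i=1}^n ℓ′_i·1{ℓ′_i ≤ μ_i·d} ≥ K. -/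
/-- Rounding a load vector to the two values `ℓ_b` and `ℓ_g` can only increase the
number of returned computations by the deadline, for every realization of the speeds. -/
theorem stmt_1 (n : ℕ) (μb μg d : ℝ) (hμb : 0 < μb) (hμbg : μb ≤ μg) (hd : 0 < d)
    (r ℓb ℓg : ℕ) (hℓb : (ℓb : ℝ) = μb * d) (hbr : ℓb ≤ r)
    (hℓg : ℓg = min ⌊μg * d⌋₊ r)
    (ℓ : Fin n → ℕ) (hℓr : ∀ i, ℓ i ≤ r)
    (ℓ' : Fin n → ℕ) (hℓ' : ∀ i, ℓ' i = if ℓ i ≤ ℓb then ℓb else ℓg)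
    (μ : Fin n → ℝ) (hμ : ∀ i, μ i = μb ∨ μ i = μg)
    (K : ℕ)
    (h : K ≤ ∑ i, if (ℓ i : ℝ) ≤ μ i * d then ℓ i else 0) :
    K ≤ ∑ i, if (ℓ' i : ℝ) ≤ μ i * d then ℓ' i else 0 := by
  refine h.trans (Finset.sum_le_sum fun i _ => ?_)
  have hgd : (ℓb : ℝ) ≤ μg * d := hℓb ▸ by gcongr
  have hgd0 : 0 ≤ μg * d := le_trans ℓb.cast_nonneg hgd
  have hℓgle : (ℓg : ℝ) ≤ μg * d := by
    rw [hℓg]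
    exact le_trans (Nat.cast_le.mpr (min_le_left _ _)) (Nat.floor_le hgd0)
  rcases hμ i with hi | hi <;> rw [hi] <;> rcases le_or_gt (ℓ i) ℓb with hc | hc
  · rw [hℓ' i, if_pos hc]
    rw [← hℓb]
    simp only [Nat.cast_le, le_refl, if_true]
    split <;> omega
  · rw [← hℓb]
    rw [if_neg (by exact_mod_cast not_le.mpr hc)]
    exact Nat.zero_le _
  · rw [hℓ' i, if_pos hc, if_pos (le_trans (Nat.cast_le.mpr hc) hgd)]
    split <;> omega
  · rw [hℓ' i, if_neg (not_le.mpr hc), if_pos hℓgle]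
    split
    next hle => have : ℓ i ≤ ⌊μg * d⌋₊ := Nat.le_floor hle
                have := hℓr i
                omega
    next => exact Nat.zero_le _
end

section
/- Let 0 < μ_b ≤ μ_g, d > 0, r ∈ ℕ, with ℓ_b := μ_b·d a natural number, ℓ_b ≤ r, and ℓ_g := min(⌊μ_g·d⌋, r). Let the workers' speeds μ_1,…,μ_n be random variables each taking values in {μ_b, μ_g} (with any joint distribution). For any load vector ℓ with 0 ≤ ℓ_i ≤ r for all i, define ℓ′ by ℓ′_i = ℓ_b if ℓ_i ≤ ℓ_b and ℓ′_i = ℓ_g otherwise. Then for any threshold K, the success probabilities satisfy P(Σ_i ℓ′_i·1{ℓ′_i ≤ μ_i·d} ≥ K) ≥ P(Σ_i ℓ_i·1{ℓ_i ≤ μ_i·d} ≥ K). In particular, there always exists a load vector taking only the two values ℓ_b and ℓ_g whose success probability is at least that of ℓ. -/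
open MeasureTheory

/-- Rounding a load vector to the two values `ℓ_b` and `ℓ_g` can only increase the
success probability: there always exists a two-valued load vector whose success
probability is at least that of any given load vector. -/
theorem stmt_2 {Ω : Type*} [MeasurableSpace Ω] (P : Measure Ω) [IsProbabilityMeasure P]
    (n : ℕ) (μb μg d : ℝ) (hμb : 0 < μb) (hμbg : μb ≤ μg) (hd : 0 < d)
    (r ℓb ℓg : ℕ) (hℓb : (ℓb : ℝ) = μb * d) (hbr : ℓb ≤ r)
    (hℓg : ℓg = min ⌊μg * d⌋₊ r)
    (μ : Fin n → Ω → ℝ) (hμ : ∀ i ω, μ i ω = μb ∨ μ i ω = μg)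
    (ℓ : Fin n → ℕ) (hℓr : ∀ i, ℓ i ≤ r)
    (ℓ' : Fin n → ℕ) (hℓ' : ∀ i, ℓ' i = if ℓ i ≤ ℓb then ℓb else ℓg)
    (K : ℕ) :
    P {ω | K ≤ ∑ i, if (ℓ i : ℝ) ≤ μ i ω * d then ℓ i else 0} ≤
      P {ω | K ≤ ∑ i, if (ℓ' i : ℝ) ≤ μ i ω * d then ℓ' i else 0} := by
  apply measure_mono
  intro ω hω
  simp only [Set.mem_setOf_eq] at hω ⊢
  refine hω.trans (Finset.sum_le_sum fun i _ => ?_)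
  by_cases h : (ℓ i : ℝ) ≤ μ i ω * d
  · rw [if_pos h]
    by_cases hb : ℓ i ≤ ℓb
    · rw [hℓ' i, if_pos hb]
      have hle : (ℓb : ℝ) ≤ μ i ω * d := by
        rcases hμ i ω with h1 | h1 <;> rw [h1, hℓb] <;> nlinarith
      rw [if_pos hle]
      exact hb
    · rw [hℓ' i, if_neg hb]
      push_neg at hb
      have hμgω : μ i ω = μg := by
        rcases hμ i ω with h1 | h1
        · exfalso
          rw [h1, ← hℓb] at h
          exact absurd (Nat.cast_le.mp h) (not_le.mpr hb)
        · exact h1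
      have hmd : (ℓ i : ℝ) ≤ μg * d := by rw [← hμgω]; exact h
      have hle1 : ℓ i ≤ ℓg := by
        rw [hℓg]
        exact le_min (Nat.le_floor hmd) (hℓr i)
      have hle2 : (ℓg : ℝ) ≤ μ i ω * d := by
        rw [hμgω]
        calc (ℓg : ℝ) ≤ (⌊μg * d⌋₊ : ℝ) := by
              exact_mod_cast hℓg ▸ min_le_left _ _
          _ ≤ μg * d := Nat.floor_le (by nlinarith)
      rw [if_pos hle2]
      exact hle1
  · rw [if_neg h]
    exact Nat.zero_le _
end

section
/- Lagrange coded computing decodability (univariate case): let F be a field, let β_1,…,β_k ∈ F be distinct, let X_1,…,X_k ∈ F, and let u ∈ F[z] be the Lagrange interpolation polynomial of degree at most k − 1 with u(β_j) = X_j for all j. Let f ∈ F[z] be a polynomial of degree at most D, and set K* = (k − 1)·D + 1. Then deg(f ∘ u) ≤ (k − 1)·D, and for any K* distinct points α_1,…,α_{K*} ∈ F, any polynomial h ∈ F[z] with deg h ≤ (k − 1)·D satisfying h(α_v) = f(u(α_v)) for all v = 1,…,K* must satisfy h(β_j) = f(X_j) for every j = 1,…,k. In other words, the K* evaluations f(u(α_1)),…,f(u(α_{K*}))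 uniquely determine all the desired evaluations f(X_1),…,f(X_k). -/
open Polynomial

/-- Lagrange coded computing decodability (univariate case): if `u` interpolates the data
`X_j` at distinct points `β_j` with `deg u ≤ k - 1` and `deg f ≤ D`, then
`deg (f ∘ u) ≤ (k-1)D`, and any polynomial `h` of degree at most `(k-1)D` agreeing with
`f ∘ u` at `K* = (k-1)D + 1` distinct points `α_v` satisfies `h(β_j) = f(X_j)` for all `j`:
the `K*` evaluations determine all desired evaluations. -/
theorem stmt_14 {F : Type*} [Field F] (k D : ℕ) (hk : 0 < k)
    (β : Fin k → F) (hβ : Function.Injective β) (X : Fin k → F)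
    (u : Polynomial F) (hu : u.degree ≤ (k - 1 : ℕ))
    (huβ : ∀ j, u.eval (β j) = X j)
    (f : Polynomial F) (hf : f.degree ≤ (D : ℕ))
    (α : Fin ((k - 1) * D + 1) → F) (hα : Function.Injective α)
    (h : Polynomial F) (hh : h.degree ≤ ((k - 1) * D : ℕ))
    (hhα : ∀ v, h.eval (α v) = f.eval (u.eval (α v))) :
    (f.comp u).degree ≤ ((k - 1) * D : ℕ) ∧ ∀ j, h.eval (β j) = f.eval (X j) := by
  have hfn : f.natDegree ≤ D := natDegree_le_iff_degree_le.mpr hf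
  have hun : u.natDegree ≤ k - 1 := natDegree_le_iff_degree_le.mpr hu
  have hcompn : (f.comp u).natDegree ≤ (k - 1) * D := by
    rw [natDegree_comp]
    calc f.natDegree * u.natDegree ≤ D * (k - 1) := Nat.mul_le_mul hfn hun
    _ = (k - 1) * D := Nat.mul_comm _ _
  have hcomp : (f.comp u).degree ≤ ((k - 1) * D : ℕ) :=
    (degree_le_natDegree).trans (by exact_mod_cast hcompn)
  refine ⟨hcomp, ?_⟩
  have hzero : h - f.comp u = 0 := by
    apply eq_zero_of_natDegree_lt_card_of_eval_eq_zero (h - f.comp u) hα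
    · intro v
      simp [eval_comp, hhα v]
    · have : (h - f.comp u).natDegree ≤ (k - 1) * D :=
        natDegree_sub_le_iff_left hcompn |>.mpr (natDegree_le_iff_degree_le.mpr hh)
      simpa [Fintype.card_fin] using Nat.lt_succ_of_le this
  have heq : h = f.comp u := sub_eq_zero.mp hzero
  intro j
  rw [heq, eval_comp, huβ j]
end
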